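/- A finite primitive permutation group with an abelian point-stabiliser contains a regular elementary abelian normal p-subgroup (i.e., it is of affine type). -/

import Mathlib

open MulAction

section Aux

open Pointwise

variable {G Ω : Type*} [Group G] [MulAction G Ω]

lemma aux_eq_one [FaithfulSMul G Ω] {g : G} (h : ∀ α : Ω, g • α = α) : g = 1 :=
  FaithfulSMul.eq_of_smul_eq_smul (fun α => by rw [h α, one_smul])

lemma aux_mem_orbit_subgroup {K : Subgroup G} {α x : Ω} :
    x ∈ orbit K α ↔ ∃ k ∈ K, k • α = x := by
  constructor
  · rintro ⟨⟨k, hk⟩, rfl⟩; exact ⟨k, hk, rfl⟩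
  · rintro ⟨k, hk, rfl⟩; exact ⟨⟨k, hk⟩, rfl⟩

lemma aux_smul_orbit_subgroup {K : Subgroup G} {α : Ω} {k : G} (hk : k ∈ K) :
    k • orbit K α = orbit K α := smul_orbit (⟨k, hk⟩ : K) α

/-- The orbit of a subgroup containing the stabilizer is a block. -/
lemma aux_block_orbit (K : Subgroup G) (α : Ω) (hK : stabilizer G α ≤ K) :
    IsBlock G (orbit K α) := by
  rw [isBlock_iff_smul_eq_of_nonempty]
  rintro g ⟨x, hx1, hx2⟩
  obtain ⟨y, hy, rfl⟩ := Set.mem_smul_set.mp hx1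
  obtain ⟨k1, hk1, rfl⟩ := aux_mem_orbit_subgroup.mp hy
  obtain ⟨k2, hk2, hk2'⟩ := aux_mem_orbit_subgroup.mp hx2
  have hs : k2⁻¹ * (g * k1) ∈ stabilizer G α := by
    rw [mem_stabilizer_iff, mul_smul, mul_smul, ← hk2', inv_smul_smul]
  have hgK : g ∈ K := by
    have := K.mul_mem (K.mul_mem hk2 (hK hs)) (K.inv_mem hk1)
    simpa [mul_assoc] using this
  exact aux_smul_orbit_subgroup hgK

lemma aux_stab_smul_orbit {P : Subgroup G} {β : Ω} (hP : stabilizer G β ≤ Subgroup.normalizer (P : Set G))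
    {s : G} (hs : s ∈ stabilizer G β) : s • orbit P β = orbit P β := by
  have hsβ : s • β = β := hs
  have hsinv : s⁻¹ • β = β := by rw [inv_smul_eq_iff, hsβ]
  ext z
  constructor
  · rintro ⟨w, hw, rfl⟩
    obtain ⟨q, hq, rfl⟩ := aux_mem_orbit_subgroup.mp hw
    refine aux_mem_orbit_subgroup.mpr ⟨s * q * s⁻¹, ?_, ?_⟩
    · exact (Subgroup.mem_normalizer_iff.mp (hP hs) q).mp hq
    · rw [mul_smul, mul_smul, hsinv]
  · intro hz
    obtain ⟨q, hq, rfl⟩ := aux_mem_orbit_subgroup.mp hz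
    refine Set.mem_smul_set.mpr ⟨(s⁻¹ * q * s) • β, ?_, ?_⟩
    · refine aux_mem_orbit_subgroup.mpr ⟨s⁻¹ * q * s, ?_, rfl⟩
      have := (Subgroup.mem_normalizer_iff.mp ((Subgroup.normalizer (P : Set G)).inv_mem (hP hs)) q).mp hq
      simpa using this
    · rw [mul_smul, mul_smul, hsβ, smul_inv_smul]

/-- The orbit of a subgroup normalized by the stabilizer is a block. -/
lemma aux_block_orbit_normalized (P : Subgroup G) (β : Ω)
    (hP : stabilizer G β ≤ Subgroup.normalizer (P : Set G)) : IsBlock G (orbit P β) := by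
  rw [isBlock_iff_smul_eq_of_nonempty]
  rintro g ⟨x, hx1, hx2⟩
  obtain ⟨y, hy, rfl⟩ := Set.mem_smul_set.mp hx1
  obtain ⟨k1, hk1, rfl⟩ := aux_mem_orbit_subgroup.mp hy
  obtain ⟨k2, hk2, hk2'⟩ := aux_mem_orbit_subgroup.mp hx2
  have hs : k2⁻¹ * (g * k1) ∈ stabilizer G β := by
    rw [mem_stabilizer_iff, mul_smul, mul_smul, ← hk2', inv_smul_smul]
  have hg : g = k2 * (k2⁻¹ * (g * k1)) * k1⁻¹ := by group
  rw [hg, mul_smul, mul_smul, aux_smul_orbit_subgroup (P.inv_mem hk1),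
    aux_stab_smul_orbit hP hs, aux_smul_orbit_subgroup hk2]


lemma aux_normal_trans [FaithfulSMul G Ω] (hprim : ∀ B : Set Ω, IsBlock G B → IsTrivialBlock B)
    {M : Subgroup G} (hbot : M ≠ ⊥) [M.Normal] (β γ : Ω) : ∃ m ∈ M, m • β = γ := by
  have : ∃ α : Ω, orbit M α = Set.univ := by
    by_contra hno
    push_neg at hno
    apply hbot
    rw [Subgroup.eq_bot_iff_forall]
    intro m hm
    apply aux_eq_one (Ω := Ω)
    intro α
    rcases hprim _ (IsBlock.orbit_of_normal (N := M) α) with hsub | huniv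
    · exact hsub (aux_mem_orbit_subgroup.mpr ⟨m, hm, rfl⟩) (mem_orbit_self α)
    · exact absurd huniv (hno α)
  obtain ⟨α, hα⟩ := this
  have hβ : β ∈ orbit M α := by rw [hα]; trivial
  have hγ : γ ∈ orbit M α := by rw [hα]; trivial
  obtain ⟨m1, hm1, rfl⟩ := aux_mem_orbit_subgroup.mp hβ
  obtain ⟨m2, hm2, rfl⟩ := aux_mem_orbit_subgroup.mp hγ
  exact ⟨m2 * m1⁻¹, M.mul_mem hm2 (M.inv_mem hm1), by rw [mul_smul, inv_smul_smul]⟩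

lemma aux_stab_card [Fintype G] [IsPretransitive G Ω] (ω β : Ω) :
    Nat.card (stabilizer G β) = Nat.card (stabilizer G ω) := by
  obtain ⟨g, rfl⟩ := exists_smul_eq G ω β
  rw [stabilizer_smul_eq_stabilizer_map_conj]
  exact Nat.card_congr (Subgroup.equivMapOfInjective _ _ (MulAut.conj g).injective).toEquiv.symm

lemma aux_fix_block [Fintype G] [IsPretransitive G Ω] (ω : Ω) :
    IsBlock G {β : Ω | stabilizer G ω ≤ stabilizer G β} := by
  have hfixeq : ∀ β : Ω, stabilizer G ω ≤ stabilizer G β ↔ stabilizer G ω = stabilizer G β := by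
    intro β
    exact ⟨fun h => Subgroup.eq_of_le_of_card_ge h (aux_stab_card ω β).le, fun h => h.le⟩
  rw [isBlock_iff_smul_eq_of_nonempty]
  rintro g ⟨x, hx1, hx2⟩
  obtain ⟨y, hy, rfl⟩ := Set.mem_smul_set.mp hx1
  have hy' : stabilizer G ω = stabilizer G y := (hfixeq y).mp hy
  have hgy : stabilizer G (g • y) = (stabilizer G ω).map (MulAut.conj g).toMonoidHom := by
    rw [stabilizer_smul_eq_stabilizer_map_conj, ← hy']
  have hconj : (stabilizer G ω).map (MulAut.conj g).toMonoidHom = stabilizer G ω := by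
    rw [← hgy]; exact ((hfixeq _).mp hx2).symm
  ext z
  simp only [Set.mem_smul_set, Set.mem_setOf_eq]
  constructor
  · rintro ⟨w, hw, rfl⟩
    rw [hfixeq, stabilizer_smul_eq_stabilizer_map_conj, ← ((hfixeq w).mp hw), hconj]
  · intro hz
    refine ⟨g⁻¹ • z, ?_, by rw [smul_inv_smul]⟩
    rw [hfixeq, stabilizer_smul_eq_stabilizer_map_conj, ← ((hfixeq z).mp hz)]
    have := congrArg (Subgroup.map (MulAut.conj g⁻¹).toMonoidHom) hconj
    rw [Subgroup.map_map] at this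
    rw [← this]
    ext u
    simp only [Subgroup.mem_map, MonoidHom.comp_apply, MulEquiv.coe_toMonoidHom,
      MulAut.conj_apply]
    constructor
    · intro hu; exact ⟨u, hu, by group⟩
    · rintro ⟨v, hv, heq⟩
      have : g⁻¹ * (g * v * g⁻¹) * g⁻¹⁻¹ = v := by group
      rw [this] at heq
      rwa [← heq]

end Aux

/-- A permutation action is primitive if it is transitive and all blocks are
trivial. -/
def IsPrimitiveAction (G Ω : Type*) [Group G] [MulAction G Ω] : Prop :=
  IsPretransitive G Ω ∧ ∀ B : Set Ω, IsBlock G B → IsTrivialBlock B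

/-- A finite primitive permutation group with an abelian point-stabiliser is
of affine type: it contains a regular normal elementary abelian `p`-subgroup. -/
theorem stmt9 {G Ω : Type*} [Group G] [Fintype G] [Fintype Ω] [MulAction G Ω]
    [FaithfulSMul G Ω] (hprim : IsPrimitiveAction G Ω) (ω : Ω)
    (hab : ∀ g ∈ stabilizer G ω, ∀ h ∈ stabilizer G ω, g * h = h * g) :
    ∃ p : ℕ, p.Prime ∧ ∃ T : Subgroup G, T.Normal ∧
      (∀ t ∈ T, t ^ p = 1) ∧ (∀ s ∈ T, ∀ t ∈ T, s * t = t * s) ∧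
      (∀ ω₁ ω₂ : Ω, ∃! t : T, t • ω₁ = ω₂) := by
  classical
  obtain ⟨htrans, hblocks⟩ := hprim
  haveI := htrans
  by_cases hΩ1 : ∀ α : Ω, α = ω
  · refine ⟨2, Nat.prime_two, ⊥, inferInstance, ?_, ?_, ?_⟩
    · intro t ht; rw [Subgroup.mem_bot] at ht; rw [ht, one_pow]
    · intro s hs t ht; rw [Subgroup.mem_bot] at hs ht; rw [hs, ht]
    · intro ω₁ ω₂
      refine ⟨1, ?_, ?_⟩
      · show (1 : (⊥ : Subgroup G)) • ω₁ = ω₂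
        rw [hΩ1 ω₁, hΩ1 ω₂]
        exact one_smul _ ω
      intro t _
      have ht : (t : G) ∈ (⊥ : Subgroup G) := t.2
      rw [Subgroup.mem_bot] at ht
      exact Subtype.ext ht
  push_neg at hΩ1
  obtain ⟨α₀, hα₀⟩ := hΩ1
  haveI hΩnt : Nontrivial Ω := ⟨⟨α₀, ω, hα₀⟩⟩
  have hΩcard : 2 ≤ Nat.card Ω := by
    rw [Nat.card_eq_fintype_card]
    exact Fintype.one_lt_card_iff_nontrivial.mpr hΩnt
  -- maximality of point stabilizers
  have hmax : ∀ (β : Ω) (K : Subgroup G), stabilizer G β ≤ K →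
      K = stabilizer G β ∨ K = ⊤ := by
    intro β K hK
    rcases hblocks _ (aux_block_orbit K β hK) with hsub | huniv
    · left
      refine le_antisymm ?_ hK
      intro k hk
      exact hsub (aux_mem_orbit_subgroup.mpr ⟨k, hk, rfl⟩) (mem_orbit_self β)
    · right
      rw [eq_top_iff]
      intro g _
      have hg : g • β ∈ orbit K β := by rw [huniv]; trivial
      obtain ⟨k, hk, hkβ⟩ := aux_mem_orbit_subgroup.mp hg
      have hs : k⁻¹ * g ∈ stabilizer G β := by
        rw [mem_stabilizer_iff, mul_smul, ← hkβ, inv_smul_smul]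
      have := K.mul_mem hk (hK hs)
      simpa using this
  -- all stabilizers are abelian
  have hab' : ∀ (β : Ω), ∀ g ∈ stabilizer G β, ∀ h ∈ stabilizer G β, g * h = h * g := by
    intro β g hg h hh
    obtain ⟨x, rfl⟩ := exists_smul_eq G ω β
    rw [stabilizer_smul_eq_stabilizer_map_conj] at hg hh
    obtain ⟨g₀, hg₀, rfl⟩ := hg
    obtain ⟨h₀, hh₀, rfl⟩ := hh
    simp only [MulEquiv.coe_toMonoidHom, MulAut.conj_apply]
    have := hab g₀ hg₀ h₀ hh₀
    calc x * g₀ * x⁻¹ * (x * h₀ * x⁻¹) = x * (g₀ * h₀) * x⁻¹ := by group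
    _ = x * (h₀ * g₀) * x⁻¹ := by rw [this]
    _ = x * h₀ * x⁻¹ * (x * g₀ * x⁻¹) := by group
  -- centralizers of nontrivial stabilizer elements
  have hstar : ∀ (β : Ω) (h : G), h ∈ stabilizer G β → h ≠ 1 →
      ∀ x : G, x * h = h * x → x ∈ stabilizer G β := by
    intro β h hh hne x hx
    have hle : stabilizer G β ≤ Subgroup.centralizer {h} := by
      intro y hy
      rw [Subgroup.mem_centralizer_iff]
      intro z hz
      rw [Set.mem_singleton_iff] at hz
      rw [hz]
      exact hab' β h hh y hy
    rcases hmax β _ hle with heq | htop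
    · rw [← heq]
      rw [Subgroup.mem_centralizer_iff]
      intro z hz
      rw [Set.mem_singleton_iff] at hz
      rw [hz]
      exact hx.symm
    · exfalso
      apply hne
      apply aux_eq_one (Ω := Ω)
      intro α
      obtain ⟨z, rfl⟩ := exists_smul_eq G β α
      have hzh : z * h = h * z := by
        have : z ∈ Subgroup.centralizer {h} := by rw [htop]; trivial
        exact (Subgroup.mem_centralizer_iff.mp this h rfl).symm
      rw [← mul_smul, ← hzh, mul_smul]
      rw [mem_stabilizer_iff.mp hh]
  by_cases hH : stabilizer G ω = ⊥
  · -- the regular case: G has prime order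
    have hstabbot : ∀ β : Ω, stabilizer G β = ⊥ := by
      intro β
      obtain ⟨g, rfl⟩ := exists_smul_eq G ω β
      rw [stabilizer_smul_eq_stabilizer_map_conj, hH, Subgroup.map_bot]
    obtain ⟨g₀, hg₀⟩ := exists_smul_eq G ω α₀
    have hg₀1 : g₀ ≠ 1 := by
      intro h
      rw [h, one_smul] at hg₀
      exact hα₀ hg₀.symm
    have hgen : ∀ g : G, g ≠ 1 → Subgroup.zpowers g = ⊤ := by
      intro g hg
      rcases hmax ω (Subgroup.zpowers g) (by rw [hH]; exact bot_le) with h1 | h2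
      · exfalso
        apply hg
        have : g ∈ Subgroup.zpowers g := Subgroup.mem_zpowers g
        rw [h1, hH, Subgroup.mem_bot] at this
        exact this
      · exact h2
    have hG1 : Nat.card G ≠ 1 := by
      intro h
      haveI : Subsingleton G := Nat.card_eq_one_iff_unique.mp h |>.1
      exact hg₀1 (Subsingleton.elim _ _)
    obtain ⟨p, hp, hpdvd⟩ := Nat.exists_prime_and_dvd hG1
    haveI : Fact p.Prime := ⟨hp⟩
    obtain ⟨x, hx⟩ := exists_prime_orderOf_dvd_card' p hpdvd
    have hx1 : x ≠ 1 := by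
      intro h
      rw [h, orderOf_one] at hx
      exact hp.one_lt.ne' hx.symm
    have hcard : Nat.card G = p := by
      rw [← hx, ← Nat.card_zpowers, hgen x hx1]
      exact (Nat.card_congr Subgroup.topEquiv.toEquiv).symm
    refine ⟨p, hp, ⊤, inferInstance, ?_, ?_, ?_⟩
    · intro t _
      rw [← hcard]
      exact pow_card_eq_one'
    · intro s hs t ht
      by_cases h1 : s = 1
      · rw [h1, one_mul, mul_one]
      · have : t ∈ Subgroup.zpowers s := by rw [hgen s h1]; trivial
        obtain ⟨k, rfl⟩ := this
        exact ((Commute.refl s).zpow_right k).eq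
    · intro ω₁ ω₂
      obtain ⟨g, hg⟩ := exists_smul_eq G ω₁ ω₂
      refine ⟨⟨g, trivial⟩, hg, ?_⟩
      intro t ht
      have hmem : g⁻¹ * (t : G) ∈ stabilizer G ω₁ := by
        rw [mem_stabilizer_iff, mul_smul]
        show g⁻¹ • ((t : G) • ω₁) = ω₁
        have : (t : G) • ω₁ = ω₂ := ht
        rw [this, ← hg, inv_smul_smul]
      rw [hstabbot ω₁, Subgroup.mem_bot] at hmem
      apply Subtype.ext
      have := congrArg (fun z => g * z) hmem
      simpa using this
  · -- the main case
    have hGcard : Nat.card G = Nat.card Ω * Nat.card (stabilizer G ω) := by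
      have h1 : Nat.card G = Nat.card (orbit G ω × stabilizer G ω) :=
        Nat.card_congr (MulAction.orbitProdStabilizerEquivGroup G ω).symm
      rw [h1, Nat.card_prod]
      congr 1
      exact Nat.card_congr ((Equiv.setCongr (orbit_eq_univ G ω)).trans (Equiv.Set.univ Ω))
    have hH0 : Nat.card (stabilizer G ω) ≠ 0 := Nat.card_pos.ne'
    have hΩ0 : Nat.card Ω ≠ 0 := Nat.card_pos.ne'
    have hG0 : Nat.card G ≠ 0 := Nat.card_pos.ne'
    have hfixuniq : ∀ β : Ω, stabilizer G ω ≤ stabilizer G β → β = ω := by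
      intro β hβ
      rcases hblocks _ (aux_fix_block (G := G) ω) with hsub | huniv
      · exact hsub hβ (le_refl (stabilizer G ω))
      · exfalso
        apply hH
        rw [Subgroup.eq_bot_iff_forall]
        intro h hh
        apply aux_eq_one (Ω := Ω)
        intro α
        have hα : α ∈ {β : Ω | stabilizer G ω ≤ stabilizer G β} := by rw [huniv]; trivial
        exact hα hh
    have hHfree : ∀ (β : Ω) (h : G), h ∈ stabilizer G ω → h ≠ 1 → h • β = β → β = ω := by
      intro β h hh hne hfix
      apply hfixuniq
      intro y hy
      exact hstar β h (mem_stabilizer_iff.mpr hfix) hne y (hab y hy h hh)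
    have hcop : Nat.Coprime (Nat.card (stabilizer G ω)) (Nat.card Ω) := by
      by_contra hnc
      obtain ⟨q, hq, hqH, hqΩ⟩ := Nat.Prime.not_coprime_iff_dvd.mp hnc
      haveI : Fact q.Prime := ⟨hq⟩
      obtain ⟨h', hh'⟩ := exists_prime_orderOf_dvd_card' (G := stabilizer G ω) q hqH
      have horder : orderOf (h' : G) = q :=
        (orderOf_injective (stabilizer G ω).subtype Subtype.coe_injective h').trans hh'
      have hne : (h' : G) ≠ 1 := by
        intro e
        rw [e, orderOf_one] at horder
        exact hq.one_lt.ne' horder.symm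
      have hpg : IsPGroup q (Subgroup.zpowers (h' : G)) :=
        IsPGroup.of_card (by rw [Nat.card_zpowers, horder, pow_one])
      have hfp : fixedPoints (Subgroup.zpowers (h' : G)) Ω = {ω} := by
        ext β
        simp only [Set.mem_singleton_iff, mem_fixedPoints]
        constructor
        · intro hf
          exact hHfree β (h' : G) h'.2 hne (hf ⟨(h' : G), Subgroup.mem_zpowers _⟩)
        · intro hb z
          have hz : (z : G) ∈ stabilizer G β := by
            rw [hb]
            exact Subgroup.zpowers_le.mpr h'.2 z.2
          exact hz
      have hmod := hpg.card_modEq_card_fixedPoints Ω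
      rw [hfp] at hmod
      have hone : Nat.card ({ω} : Set Ω) = 1 := by simp
      rw [hone] at hmod
      have h0 : Nat.card Ω % q = 0 := Nat.eq_zero_of_dvd_of_lt hqΩ |> fun _ => Nat.mod_eq_zero_of_dvd hqΩ
      have h1 : (1 : ℕ) % q = 1 := Nat.mod_eq_of_lt hq.one_lt
      rw [Nat.ModEq] at hmod
      rw [h0, h1] at hmod
      exact one_ne_zero hmod.symm
    have hSyl : ∀ q : ℕ, q.Prime → q ∣ Nat.card (stabilizer G ω) →
        ∃ P : Sylow q G, (P : Subgroup G) ≤ stabilizer G ω := by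
      intro q hq hqH
      haveI : Fact q.Prime := ⟨hq⟩
      obtain ⟨Q⟩ : Nonempty (Sylow q (stabilizer G ω)) := inferInstance
      have hQ : IsPGroup q ((Q : Subgroup (stabilizer G ω)).map (stabilizer G ω).subtype) :=
        Q.2.map (stabilizer G ω).subtype
      obtain ⟨P, hP⟩ := hQ.exists_le_sylow
      have hfq : (Nat.card G).factorization q = (Nat.card (stabilizer G ω)).factorization q := by
        rw [hGcard, Nat.factorization_mul hΩ0 hH0]
        simp only [Finsupp.coe_add, Pi.add_apply]
        have hz : (Nat.card Ω).factorization q = 0 :=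
          Nat.factorization_eq_zero_of_not_dvd
            (fun hd => (Nat.Prime.not_coprime_iff_dvd.mpr ⟨q, hq, hqH, hd⟩) hcop)
        omega
      have hmapcard : Nat.card ((Q : Subgroup (stabilizer G ω)).map (stabilizer G ω).subtype)
          = Nat.card (Q : Subgroup (stabilizer G ω)) :=
        (Nat.card_congr (Subgroup.equivMapOfInjective _ _ (Subgroup.subtype_injective _)).toEquiv).symm
      have hcards : Nat.card P ≤
          Nat.card ((Q : Subgroup (stabilizer G ω)).map (stabilizer G ω).subtype) := by
        rw [hmapcard, Sylow.card_eq_multiplicity P, hfq, ← Sylow.card_eq_multiplicity Q]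
      have heq := Subgroup.eq_of_le_of_card_ge hP hcards
      exact ⟨P, by rw [← heq]; exact Subgroup.map_subtype_le _⟩
    have hburn : ∀ q : ℕ, q.Prime → q ∣ Nat.card (stabilizer G ω) →
        ∃ K : Subgroup G, K.Normal ∧ K.index = q ^ (Nat.card G).factorization q := by
      intro q hq hqH
      haveI : Fact q.Prime := ⟨hq⟩
      obtain ⟨P, hPH⟩ := hSyl q hq hqH
      have hfpos : 0 < (Nat.card G).factorization q :=
        hq.factorization_pos_of_dvd hG0 (hqH.trans ⟨Nat.card Ω, by rw [hGcard]; ring⟩)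
      have hPcard : Nat.card (P : Subgroup G) = q ^ (Nat.card G).factorization q :=
        Sylow.card_eq_multiplicity P
      have hPne : (P : Subgroup G) ≠ ⊥ := by
        intro hbot
        rw [hbot, Subgroup.card_bot] at hPcard
        have : 2 ≤ q ^ (Nat.card G).factorization q :=
          le_trans hq.two_le (Nat.le_self_pow hfpos.ne' q)
        omega
      obtain ⟨x, hxP, hx1⟩ : ∃ x ∈ (P : Subgroup G), x ≠ 1 := by
        haveI : Nontrivial (P : Subgroup G) := (Subgroup.nontrivial_iff_ne_bot _).mpr hPne
        obtain ⟨⟨x, hx⟩, h1⟩ := exists_ne (1 : (P : Subgroup G))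
        exact ⟨x, hx, fun he => h1 (Subtype.ext he)⟩
      have hcent : Subgroup.normalizer ((P : Subgroup G) : Set G) ≤ Subgroup.centralizer ((P : Subgroup G) : Set G) := by
        intro g hg
        have hgH : g ∈ stabilizer G ω := by
          have hx2 : (g * x * g⁻¹) ∈ (P : Subgroup G) :=
            (Subgroup.mem_normalizer_iff.mp hg x).mp hxP
          have hfix : x • (g⁻¹ • ω) = g⁻¹ • ω := by
            have : (g * x * g⁻¹) • ω = ω := mem_stabilizer_iff.mp (hPH hx2)
            rw [mul_smul, mul_smul] at this
            calc x • (g⁻¹ • ω) = g⁻¹ • (g • (x • (g⁻¹ • ω))) := by rw [inv_smul_smul]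
            _ = g⁻¹ • ω := by rw [this]
          have hβ : g⁻¹ • ω = ω := hHfree (g⁻¹ • ω) x (hPH hxP) hx1 hfix
          have : g⁻¹ ∈ stabilizer G ω := mem_stabilizer_iff.mpr hβ
          simpa using (stabilizer G ω).inv_mem this
        rw [Subgroup.mem_centralizer_iff]
        intro y hy
        exact hab y (hPH hy) g hgH
      refine ⟨(MonoidHom.transferSylow P hcent).ker, MonoidHom.normal_ker _, ?_⟩
      have hcompl := MonoidHom.ker_transferSylow_isComplement' P hcent
      have h1 := hcompl.card_mul
      have h2 := Subgroup.card_mul_index (MonoidHom.transferSylow P hcent).ker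
      rw [← hPcard]
      have hk0 : Nat.card (MonoidHom.transferSylow P hcent).ker ≠ 0 := Nat.card_pos.ne'
      exact Nat.eq_of_mul_eq_mul_left (Nat.pos_of_ne_zero hk0) (h2.trans h1.symm)
    -- the normal complement N
    set prs := (Nat.card (stabilizer G ω)).primeFactors with hprs
    have hchoice : ∀ q : prs, ∃ K : Subgroup G, K.Normal ∧
        K.index = (q : ℕ) ^ (Nat.card G).factorization q :=
      fun q => hburn q (Nat.prime_of_mem_primeFactors q.2) (Nat.dvd_of_mem_primeFactors q.2)
    choose K hKnorm hKidx using hchoice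
    set N := ⨅ q : prs, K q with hNdef
    haveI hNnormal : N.Normal := by
      constructor
      intro x hx g
      rw [hNdef, Subgroup.mem_iInf] at hx ⊢
      intro q
      exact (hKnorm q).conj_mem x (hx q) g
    have hfacteq : ∀ q ∈ prs, (Nat.card G).factorization q
        = (Nat.card (stabilizer G ω)).factorization q := by
      intro q hq
      rw [hGcard, Nat.factorization_mul hΩ0 hH0]
      simp only [Finsupp.coe_add, Pi.add_apply]
      have hz : (Nat.card Ω).factorization q = 0 :=
        Nat.factorization_eq_zero_of_not_dvd (fun hd =>
          (Nat.Prime.not_coprime_iff_dvd.mpr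
            ⟨q, Nat.prime_of_mem_primeFactors hq, Nat.dvd_of_mem_primeFactors hq, hd⟩) hcop)
      omega
    have hprodH : ∏ q ∈ prs, (q : ℕ) ^ (Nat.card G).factorization q
        = Nat.card (stabilizer G ω) := by
      rw [Finset.prod_congr rfl (fun q hq => by rw [hfacteq q hq])]
      conv_rhs => rw [← Nat.factorization_prod_pow_eq_self hH0]
      rw [Finsupp.prod]
      rfl
    have hNidxle : N.index ≤ Nat.card (stabilizer G ω) := by
      calc N.index ≤ ∏ q : prs, (K q).index := Subgroup.index_iInf_le K
      _ = ∏ q : prs, (q : ℕ) ^ (Nat.card G).factorization q :=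
          Finset.prod_congr rfl (fun q _ => hKidx q)
      _ = ∏ q ∈ prs, (q : ℕ) ^ (Nat.card G).factorization q :=
          Finset.prod_coe_sort prs (fun x => x ^ (Nat.card G).factorization x)
      _ = Nat.card (stabilizer G ω) := hprodH
    have hNidx0 : N.index ≠ 0 := Subgroup.index_ne_zero_of_finite
    have hNidxdvd : Nat.card (stabilizer G ω) ∣ N.index := by
      rw [← Nat.factorization_le_iff_dvd hH0 hNidx0]
      intro q
      by_cases hq : q ∈ prs
      · have h1 : (K ⟨q, hq⟩).index ∣ N.index :=
          Subgroup.index_dvd_of_le (iInf_le K (⟨q, hq⟩ : prs))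
        rw [hKidx ⟨q, hq⟩] at h1
        have h2 := (Nat.Prime.pow_dvd_iff_le_factorization
          (Nat.prime_of_mem_primeFactors hq) hNidx0).mp h1
        rw [hfacteq q hq] at h2
        exact h2
      · have : (Nat.card (stabilizer G ω)).factorization q = 0 := by
          simp only [hprs, ← Nat.support_factorization] at hq
          exact Finsupp.notMem_support_iff.mp hq
        rw [this]
        exact Nat.zero_le _
    have hNidx : N.index = Nat.card (stabilizer G ω) :=
      Nat.le_antisymm hNidxle (Nat.le_of_dvd (Nat.pos_of_ne_zero hNidx0) hNidxdvd)
    have hNcard : Nat.card N = Nat.card Ω := by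
      have h1 := Subgroup.card_mul_index N
      rw [hNidx, hGcard] at h1
      exact Nat.eq_of_mul_eq_mul_right (Nat.pos_of_ne_zero hH0) h1
    have hNH : N ⊓ stabilizer G ω = ⊥ :=
      Subgroup.inf_eq_bot_of_coprime (by rw [hNcard]; exact hcop.symm)
    have hNne : N ≠ ⊥ := by
      intro hbot
      rw [hbot, Subgroup.card_bot] at hNcard
      omega
    have hstabN : ∀ (β : Ω) (x : G), x ∈ N → x • β = β → x = 1 := by
      intro β x hxN hxβ
      obtain ⟨g, rfl⟩ := exists_smul_eq G ω β
      have hx : x ∈ stabilizer G (g • ω) := mem_stabilizer_iff.mpr hxβ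
      rw [stabilizer_smul_eq_stabilizer_map_conj] at hx
      obtain ⟨h, hhH, hhx⟩ := hx
      simp only [MulEquiv.coe_toMonoidHom, MulAut.conj_apply] at hhx
      have hhN : h ∈ N := by
        have := hNnormal.conj_mem x hxN g⁻¹
        rw [← hhx] at this
        simpa [mul_assoc] using this
      have : h ∈ N ⊓ stabilizer G ω := ⟨hhN, hhH⟩
      rw [hNH, Subgroup.mem_bot] at this
      rw [this, mul_one, mul_inv_cancel] at hhx
      exact hhx.symm
    obtain ⟨p, hp, hpΩ⟩ := Nat.exists_prime_and_dvd (n := Nat.card Ω) (by omega)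
    haveI : Fact p.Prime := ⟨hp⟩
    obtain ⟨P''⟩ : Nonempty (Sylow p G) := inferInstance
    have hP''N : (P'' : Subgroup G) ≤ N := by
      have himg : IsPGroup p ((P'' : Subgroup G).map (QuotientGroup.mk' N)) :=
        P''.2.map (QuotientGroup.mk' N)
      obtain ⟨k, hk⟩ := (IsPGroup.iff_card).mp himg
      have hdvd : Nat.card ((P'' : Subgroup G).map (QuotientGroup.mk' N)) ∣ Nat.card (G ⧸ N) :=
        Subgroup.card_subgroup_dvd_card _
      have hqcard : Nat.card (G ⧸ N) = Nat.card (stabilizer G ω) := by rw [← hNidx]; rfl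
      rw [hk, hqcard] at hdvd
      have hpH : ¬ p ∣ Nat.card (stabilizer G ω) := fun hd =>
        Nat.Prime.not_coprime_iff_dvd.mpr ⟨p, hp, hd, hpΩ⟩ hcop
      have hk0 : k = 0 := by
        by_contra hk0
        exact hpH ((dvd_pow_self p hk0).trans hdvd)
      rw [hk0, pow_zero, Subgroup.card_eq_one] at hk
      rw [Subgroup.map_eq_bot_iff, QuotientGroup.ker_mk'] at hk
      exact hk
    have hfrat : Subgroup.normalizer ((P'' : Subgroup G) : Set G) ⊔ N = ⊤ :=
      Sylow.normalizer_sup_eq_top' P'' hP''N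
    set M := Subgroup.normalizer ((P'' : Subgroup G) : Set G) with hMdef
    set J := N.subgroupOf M with hJdef
    have hJidx : J.index = Nat.card (stabilizer G ω) := by
      have h1 : N.relIndex M = N.relIndex ⊤ := by
        rw [← hfrat, Subgroup.relIndex_sup_right]
      have h2 : J.index = N.relIndex M := rfl
      rw [h2, h1, Subgroup.relIndex_top_right, hNidx]
    have hJcard_dvd : Nat.card J ∣ Nat.card Ω := by
      have h1 : Nat.card J = Nat.card ((N ⊓ M : Subgroup G)) := by
        rw [← Subgroup.subgroupOf_map_subtype]
        exact Nat.card_congr (Subgroup.equivMapOfInjective _ _ (Subgroup.subtype_injective _)).toEquiv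
      rw [h1, ← hNcard]
      exact Subgroup.card_dvd_of_le inf_le_left
    have hJcop : Nat.Coprime (Nat.card J) J.index := by
      rw [hJidx]
      exact Nat.Coprime.coprime_dvd_left hJcard_dvd hcop.symm
    obtain ⟨L', hL'⟩ := Subgroup.exists_right_complement'_of_coprime hJcop
    set L := L'.map M.subtype with hLdef
    have hLM : L ≤ M := Subgroup.map_subtype_le L'
    have hLcard : Nat.card L = Nat.card (stabilizer G ω) := by
      have h1 : Nat.card L = Nat.card L' :=
        Nat.card_congr (Subgroup.equivMapOfInjective _ _ (Subgroup.subtype_injective _)).toEquiv.symm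
      have h2 := hL'.card_mul
      have h3 := Subgroup.card_mul_index J
      rw [h1, ← hJidx]
      exact Nat.eq_of_mul_eq_mul_left Nat.card_pos (h2.trans h3.symm)
    have hLN : ∀ x : G, x ∈ L → x ∈ N → x = 1 := by
      intro x hxL hxN
      obtain ⟨y, hyL', rfl⟩ := hxL
      have hyJ : y ∈ J := by
        rw [hJdef, Subgroup.mem_subgroupOf]
        exact hxN
      have hb := hL'.disjoint.le_bot (Subgroup.mem_inf.mpr ⟨hyJ, hyL'⟩)
      rw [Subgroup.mem_bot] at hb
      rw [hb]
      rfl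
    have hquotsurj : Function.Surjective
        ((QuotientGroup.mk' N).comp (stabilizer G ω).subtype) := by
      have hinj : Function.Injective ((QuotientGroup.mk' N).comp (stabilizer G ω).subtype) := by
        rw [← MonoidHom.ker_eq_bot_iff, Subgroup.eq_bot_iff_forall]
        intro y hy
        rw [MonoidHom.mem_ker, MonoidHom.comp_apply] at hy
        have h1 : ((stabilizer G ω).subtype y : G) ∈ N := (QuotientGroup.eq_one_iff _).mp hy
        have h2 : (y : G) ∈ N ⊓ stabilizer G ω := ⟨h1, y.2⟩
        rw [hNH, Subgroup.mem_bot] at h2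
        exact Subtype.ext h2
      have hcards : Nat.card (stabilizer G ω) = Nat.card (G ⧸ N) := by rw [← hNidx]; rfl
      exact ((Nat.bijective_iff_injective_and_card _).mpr ⟨hinj, hcards⟩).surjective
    have hquotcomm : ∀ a b : G ⧸ N, a * b = b * a := by
      intro a b
      obtain ⟨h1, rfl⟩ := hquotsurj a
      obtain ⟨h2, rfl⟩ := hquotsurj b
      rw [← MonoidHom.map_mul, ← MonoidHom.map_mul]
      congr 1
      exact Subtype.ext (hab h1 h1.2 h2 h2.2)
    have hLab : ∀ x ∈ L, ∀ y ∈ L, x * y = y * x := by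
      intro x hx y hy
      have h1 : ((x * y : G) : G ⧸ N) = ((y * x : G) : G ⧸ N) := by
        rw [QuotientGroup.mk_mul, QuotientGroup.mk_mul]
        exact hquotcomm _ _
      have h2 : (x * y)⁻¹ * (y * x) ∈ N := QuotientGroup.eq.mp h1
      have h3 : (x * y)⁻¹ * (y * x) ∈ L :=
        L.mul_mem (L.inv_mem (L.mul_mem hx hy)) (L.mul_mem hy hx)
      have h4 := hLN _ h3 h2
      rw [inv_mul_eq_one] at h4
      exact h4
    -- find an element of prime order in L
    have hHne1 : 1 < Nat.card (stabilizer G ω) := (Subgroup.one_lt_card_iff_ne_bot _).mpr hH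
    obtain ⟨q, hq, hqL⟩ := Nat.exists_prime_and_dvd (n := Nat.card L) (by rw [hLcard]; omega)
    haveI : Fact q.Prime := ⟨hq⟩
    obtain ⟨y', hy'⟩ := exists_prime_orderOf_dvd_card' (G := L) q hqL
    have hyL : (y' : G) ∈ L := y'.2
    have hyorder : orderOf (y' : G) = q :=
      (orderOf_injective L.subtype (Subgroup.subtype_injective _) y').trans hy'
    have hyne : (y' : G) ≠ 1 := by
      intro e
      rw [e, orderOf_one] at hyorder
      exact hq.one_lt.ne' hyorder.symm
    have hypgrp : IsPGroup q (Subgroup.zpowers (y' : G)) :=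
      IsPGroup.of_card (n := 1) (by rw [Nat.card_zpowers, hyorder, pow_one])
    obtain ⟨R, hyR⟩ := hypgrp.exists_le_sylow
    have hqH : q ∣ Nat.card (stabilizer G ω) := by rw [← hLcard]; exact hqL
    obtain ⟨Qs, hQsH⟩ := hSyl q hq hqH
    obtain ⟨g, hg⟩ := MulAction.exists_smul_eq G Qs R
    have hyconj : g⁻¹ * (y' : G) * g ∈ stabilizer G ω := by
      have h1 : (y' : G) ∈ (R : Subgroup G) := hyR (Subgroup.mem_zpowers _)
      rw [← hg] at h1
      have h2 : (y' : G) ∈ ((g • Qs : Sylow q G) : Set G) := h1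
      rw [Sylow.coe_smul, Set.mem_smul_set_iff_inv_smul_mem] at h2
      rw [← map_inv, MulAut.smul_def, MulAut.conj_apply, inv_inv] at h2
      exact hQsH h2
    set β := g • ω with hβdef
    have hystab : (y' : G) ∈ stabilizer G β := by
      rw [hβdef, stabilizer_smul_eq_stabilizer_map_conj]
      exact ⟨g⁻¹ * (y' : G) * g, hyconj,
        by simp only [MulEquiv.coe_toMonoidHom, MulAut.conj_apply]; group⟩
    have hLstab : L ≤ stabilizer G β := by
      intro m hm
      exact hstar β (y' : G) hystab hyne m (hLab m hm (y' : G) hyL)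
    have hLeq : L = stabilizer G β :=
      Subgroup.eq_of_le_of_card_ge hLstab (by rw [aux_stab_card ω β, hLcard])
    have hstabM : stabilizer G β ≤ M := by rw [← hLeq]; exact hLM
    -- block argument: the P''-orbit of β is a block, so N is a p-group
    have hblk := aux_block_orbit_normalized (P'' : Subgroup G) β hstabM
    have hNP : (P'' : Subgroup G) = N := by
      rcases hblocks _ hblk with hsub | huniv
      · exfalso
        have hPle : (P'' : Subgroup G) ≤ stabilizer G β := by
          intro x hx
          exact mem_stabilizer_iff.mpr
            (hsub (aux_mem_orbit_subgroup.mpr ⟨x, hx, rfl⟩) (mem_orbit_self β))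
        have hbot : (P'' : Subgroup G) = ⊥ := by
          rw [Subgroup.eq_bot_iff_forall]
          intro x hx
          exact hstabN β x (hP''N hx) (mem_stabilizer_iff.mp (hPle hx))
        have hPcard := Sylow.card_eq_multiplicity P''
        rw [hbot, Subgroup.card_bot] at hPcard
        have hfpos : 0 < (Nat.card G).factorization p :=
          hp.factorization_pos_of_dvd hG0 (hpΩ.trans ⟨Nat.card (stabilizer G ω), hGcard⟩)
        have h2le : 2 ≤ p ^ (Nat.card G).factorization p :=
          le_trans hp.two_le (Nat.le_self_pow hfpos.ne' p)
        omega
      · have horbcard : Nat.card (orbit (P'' : Subgroup G) β) = Nat.card Ω :=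
          Nat.card_congr ((Equiv.setCongr huniv).trans (Equiv.Set.univ Ω))
        have h1 : Nat.card (P'' : Subgroup G)
            = Nat.card (orbit (P'' : Subgroup G) β) * Nat.card (stabilizer (P'' : Subgroup G) β) := by
          rw [← Nat.card_prod]
          exact Nat.card_congr (MulAction.orbitProdStabilizerEquivGroup _ β).symm
        have hΩdvd : Nat.card Ω ∣ Nat.card (P'' : Subgroup G) := by
          rw [h1, horbcard]
          exact Dvd.intro _ rfl
        have hdvd2 : Nat.card (P'' : Subgroup G) ∣ Nat.card Ω := by
          rw [← hNcard]
          exact Subgroup.card_dvd_of_le hP''N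
        have hcardeq := Nat.dvd_antisymm hdvd2 hΩdvd
        exact Subgroup.eq_of_le_of_card_ge hP''N (by rw [hcardeq, hNcard])
    have hNp : IsPGroup p N := hNP ▸ P''.2
    haveI hNnt : Nontrivial N := (Subgroup.nontrivial_iff_ne_bot N).mpr hNne
    haveI hcnt := hNp.center_nontrivial
    obtain ⟨z, hz1⟩ := exists_ne (1 : Subgroup.center N)
    set x₀ : G := ((z : N) : G) with hx₀def
    have hx₀N : x₀ ∈ N := (z : N).2
    have hx₀ne : x₀ ≠ 1 := by
      intro e
      exact hz1 (Subtype.ext (Subtype.ext e))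
    have hx₀c : ∀ m ∈ (N : Set G), m * x₀ = x₀ * m := by
      intro m hm
      exact congrArg Subtype.val (Subgroup.mem_center_iff.mp z.2 ⟨m, hm⟩)
    set Cnt := Subgroup.centralizer (N : Set G) ⊓ N with hCntdef
    have hCntN : Cnt ≤ N := inf_le_right
    have hCntcomm : ∀ x ∈ Cnt, ∀ m ∈ N, m * x = x * m := by
      intro x hx m hm
      exact Subgroup.mem_centralizer_iff.mp (Subgroup.mem_inf.mp hx).1 m hm
    have hcommute : ∀ a ∈ Cnt, ∀ b ∈ Cnt, Commute a b := by
      intro a ha b hb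
      exact (hCntcomm a ha b (hCntN hb)).symm
    have hx₀Cnt : x₀ ∈ Cnt :=
      Subgroup.mem_inf.mpr ⟨Subgroup.mem_centralizer_iff.mpr hx₀c, hx₀N⟩
    have hCntnormal : Cnt.Normal := by
      constructor
      intro x hx g
      rw [Subgroup.mem_inf] at hx ⊢
      refine ⟨?_, hNnormal.conj_mem x hx.2 g⟩
      rw [Subgroup.mem_centralizer_iff]
      intro m hm
      have hm' : g⁻¹ * m * g ∈ N := by
        have := hNnormal.conj_mem m hm g⁻¹
        simpa using this
      have hc := Subgroup.mem_centralizer_iff.mp hx.1 (g⁻¹ * m * g) hm'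
      calc m * (g * x * g⁻¹) = g * ((g⁻¹ * m * g) * x) * g⁻¹ := by group
      _ = g * (x * (g⁻¹ * m * g)) * g⁻¹ := by rw [hc]
      _ = (g * x * g⁻¹) * m := by group
    obtain ⟨j, hj⟩ := IsPGroup.iff_orderOf.mp hNp (z : N)
    have hord : orderOf x₀ = p ^ j := by
      rw [hx₀def, ← hj]
      exact orderOf_injective N.subtype (Subgroup.subtype_injective _) (z : N)
    have hj1 : 1 ≤ j := by
      rcases Nat.eq_zero_or_pos j with h0 | h1
      · exfalso
        rw [h0, pow_zero, orderOf_eq_one_iff] at hord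
        exact hx₀ne hord
      · exact h1
    set t₀ := x₀ ^ (p ^ (j - 1)) with ht₀def
    have hppow : p ^ (j - 1) * p = p ^ j := by
      rw [← pow_succ]
      congr 1
      omega
    have ht₀pow : t₀ ^ p = 1 := by
      rw [ht₀def, ← pow_mul, hppow, ← hord, pow_orderOf_eq_one]
    have ht₀ne : t₀ ≠ 1 := by
      intro e
      rw [ht₀def] at e
      have hdvd := orderOf_dvd_of_pow_eq_one e
      rw [hord, Nat.pow_dvd_pow_iff_le_right hp.one_lt] at hdvd
      omega
    have ht₀Cnt : t₀ ∈ Cnt := Cnt.pow_mem hx₀Cnt _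
    -- the subgroup T
    set T : Subgroup G := {
      carrier := {x : G | x ∈ Cnt ∧ x ^ p = 1}
      one_mem' := ⟨Cnt.one_mem, one_pow p⟩
      mul_mem' := fun {a b} ha hb => ⟨Cnt.mul_mem ha.1 hb.1,
        by rw [(hcommute a ha.1 b hb.1).mul_pow, ha.2, hb.2, one_mul]⟩
      inv_mem' := fun {a} ha => ⟨Cnt.inv_mem ha.1,
        by rw [inv_pow, ha.2, inv_one]⟩ } with hTdef
    have hTmem : ∀ x : G, x ∈ T ↔ x ∈ Cnt ∧ x ^ p = 1 := fun x => Iff.rfl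
    have hTnormal : T.Normal := by
      constructor
      intro x hx g
      rw [hTmem] at hx ⊢
      refine ⟨hCntnormal.conj_mem x hx.1 g, ?_⟩
      have hcp : (g * x * g⁻¹) ^ p = g * x ^ p * g⁻¹ := by
        have h := map_pow (MulAut.conj g) x p
        simp only [MulAut.conj_apply] at h
        exact h.symm
      rw [hcp, hx.2, mul_one, mul_inv_cancel]
    have hTne : T ≠ ⊥ := by
      intro e
      have ht : t₀ ∈ T := (hTmem t₀).mpr ⟨ht₀Cnt, ht₀pow⟩
      rw [e, Subgroup.mem_bot] at ht
      exact ht₀ne ht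
    refine ⟨p, hp, T, hTnormal, ?_, ?_, ?_⟩
    · exact fun t ht => ((hTmem t).mp ht).2
    · intro s hs t ht
      exact (hcommute s ((hTmem s).mp hs).1 t ((hTmem t).mp ht).1).eq
    · intro ω₁ ω₂
      haveI := hTnormal
      obtain ⟨m, hmT, hmω⟩ := aux_normal_trans hblocks hTne ω₁ ω₂
      refine ⟨⟨m, hmT⟩, hmω, ?_⟩
      intro t htω
      apply Subtype.ext
      have h1 : (m⁻¹ * (t : G)) • ω₁ = ω₁ := by
        rw [mul_smul]
        have ht1 : (t : G) • ω₁ = ω₂ := htω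
        rw [ht1, ← hmω, inv_smul_smul]
      have h2 : m⁻¹ * (t : G) ∈ N :=
        N.mul_mem (N.inv_mem (hCntN ((hTmem m).mp hmT).1))
          (hCntN ((hTmem (t : G)).mp t.2).1)
      have h3 := hstabN ω₁ _ h2 h1
      rw [inv_mul_eq_one] at h3
      exact h3.symm
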